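/- Mistake bound for the Multiclass Perceptron: Let (x_1,y_1),…,(x_T,y_T) be labeled examples in an inner product space V with labels in {1,…,K} that are weakly linearly separable with margin γ > 0 and satisfy ‖x_t‖ ≤ R for all t. Define weight vectors w_1^{(1)} = … = w_K^{(1)} = 0, and suppose that at each round t a prediction ŷ_t ∈ {1,…,K} is chosen so that ⟨w_{ŷ_t}^{(t)}, x_t⟩ ≥ ⟨w_i^{(t)}, x_t⟩ for all i ∈ {1,…,K}; if ŷ_t ≠ y_t then w_{y_t}^{(t+1)} = w_{y_t}^{(t)} + x_t, w_{ŷ_t}^{(t+1)} = w_{ŷ_t}^{(t)} − x_t, and w_i^{(t+1)} = w_i^{(t)} for all other i; if ŷ_t = y_t then w_i^{(t+1)} = w_i^{(t)} for all i. Then the number of rounds t with ŷ_t ≠ y_t is at most ⌊2(R/γ)²⌋. -/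

import Mathlib

open scoped RealInnerProductSpace
open Finset

/-- Labeled examples are weakly linearly separable with margin `γ`. -/
def WeaklySeparable {V : Type*} [NormedAddCommGroup V] [InnerProductSpace ℝ V]
    {T K : ℕ} (x : Fin T → V) (y : Fin T → Fin K) (γ : ℝ) : Prop :=
  ∃ w : Fin K → V, (∑ i, ‖w i‖ ^ 2 ≤ 1) ∧
    ∀ t : Fin T, ∀ i : Fin K, i ≠ y t → ⟪x t, w (y t)⟫ ≥ ⟪x t, w i⟫ + γ

/-- Helper: sum of a function changed at two points. -/
lemma sum_update_pair {K : ℕ} {a b : Fin K} (hab : a ≠ b) (g g' : Fin K → ℝ)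
    (h : ∀ i, i ≠ a → i ≠ b → g' i = g i) :
    ∑ i, g' i = ∑ i, g i + (g' a - g a) + (g' b - g b) := by
  have h1 : ∑ i, (g' i - g i) = ∑ i ∈ ({a, b} : Finset (Fin K)), (g' i - g i) := by
    refine (Finset.sum_subset (Finset.subset_univ _) ?_).symm
    intro i _ hi
    simp only [Finset.mem_insert, Finset.mem_singleton, not_or] at hi
    rw [h i hi.1 hi.2, sub_self]
  have h2 : ∑ i ∈ ({a, b} : Finset (Fin K)), (g' i - g i) = (g' a - g a) + (g' b - g b) :=
    Finset.sum_pair hab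
  have h3 : ∑ i, (g' i - g i) = ∑ i, g' i - ∑ i, g i := Finset.sum_sub_distrib _ _
  linarith [h1, h2, h3]

/-- Mistake bound for the Multiclass Perceptron: if the examples are weakly linearly
separable with margin `γ > 0` and all have norm at most `R`, then the Multiclass Perceptron
makes at most `⌊2(R/γ)²⌋` mistakes. The run of the algorithm is described by the weight
vectors `w u i` (the weight vector of class `i` before round `u`, here `u` ranges over `ℕ`)
and the predictions `yhat t`. -/
theorem multiclass_perceptron_mistake_bound
    {V : Type*} [NormedAddCommGroup V] [InnerProductSpace ℝ V]
    {T K : ℕ} (γ R : ℝ) (hγ : 0 < γ) (hR : 0 ≤ R)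
    (x : Fin T → V) (y : Fin T → Fin K)
    (hsep : WeaklySeparable x y γ)
    (hx : ∀ t, ‖x t‖ ≤ R)
    (w : ℕ → Fin K → V) (yhat : Fin T → Fin K)
    (hw0 : ∀ i, w 0 i = 0)
    (hpred : ∀ t : Fin T, ∀ i : Fin K, ⟪w t.val (yhat t), x t⟫ ≥ ⟪w t.val i, x t⟫)
    (hupd_mistake : ∀ t : Fin T, yhat t ≠ y t →
      w (t.val + 1) (y t) = w t.val (y t) + x t ∧
      w (t.val + 1) (yhat t) = w t.val (yhat t) - x t ∧
      ∀ i : Fin K, i ≠ y t → i ≠ yhat t → w (t.val + 1) i = w t.val i)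
    (hupd_correct : ∀ t : Fin T, yhat t = y t → ∀ i : Fin K, w (t.val + 1) i = w t.val i) :
    (Finset.univ.filter fun t : Fin T => yhat t ≠ y t).card ≤ ⌊2 * (R / γ) ^ 2⌋₊ := by
  obtain ⟨ws, hws, hmargin⟩ := hsep
  set M : ℕ → ℕ := fun s =>
    (Finset.univ.filter fun t : Fin T => t.val < s ∧ yhat t ≠ y t).card with hMdef
  have key : ∀ s, s ≤ T →
      γ * M s ≤ ∑ i, ⟪ws i, w s i⟫ ∧ ∑ i, ‖w s i‖ ^ 2 ≤ 2 * R ^ 2 * M s := by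
    intro s hs
    induction s with
    | zero =>
      simp [hMdef, hw0]
    | succ n ih =>
      have hn : n ≤ T := Nat.le_of_succ_le hs
      obtain ⟨ih1, ih2⟩ := ih hn
      set t : Fin T := ⟨n, Nat.lt_of_succ_le hs⟩ with ht
      have hval : t.val = n := rfl
      by_cases hmis : yhat t = y t
      · have hMeq : M (n + 1) = M n := by
          simp only [hMdef]
          congr 1
          apply Finset.filter_congr
          intro t' _
          constructor
          · rintro ⟨h1, h2⟩
            refine ⟨?_, h2⟩
            rcases Nat.lt_succ_iff_lt_or_eq.mp h1 with h | h
            · exact h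
            · exfalso; apply h2
              have : t' = t := Fin.ext h
              rw [this]; exact hmis
          · rintro ⟨h1, h2⟩; exact ⟨Nat.lt_succ_of_lt h1, h2⟩
        have hweq : ∀ i, w (n + 1) i = w n i := by
          intro i; have := hupd_correct t hmis i; rwa [hval] at this
        constructor
        · rw [hMeq]; simp only [hweq]; exact ih1
        · rw [hMeq]; simp only [hweq]; exact ih2
      · -- mistake round
        obtain ⟨hy, hyh, hoth⟩ := hupd_mistake t hmis
        rw [hval] at hy hyh hoth
        have hab : y t ≠ yhat t := fun h => hmis h.symm
        have hMeq : M (n + 1) = M n + 1 := by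
          simp only [hMdef]
          have hset : (Finset.univ.filter fun t' : Fin T => t'.val < n + 1 ∧ yhat t' ≠ y t')
              = insert t (Finset.univ.filter fun t' : Fin T => t'.val < n ∧ yhat t' ≠ y t') := by
            ext t'
            simp only [Finset.mem_filter, Finset.mem_insert, Finset.mem_univ, true_and]
            constructor
            · rintro ⟨h1, h2⟩
              rcases Nat.lt_succ_iff_lt_or_eq.mp h1 with h | h
              · exact Or.inr ⟨h, h2⟩
              · exact Or.inl (Fin.ext h)
            · rintro (h | ⟨h1, h2⟩)
              · subst h; exact ⟨Nat.lt_succ_self n, hmis⟩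
              · exact ⟨Nat.lt_succ_of_lt h1, h2⟩
          rw [hset, Finset.card_insert_of_notMem]
          simp [hval]
        constructor
        · -- inner product sum increases by at least γ
          have hsum : ∑ i, ⟪ws i, w (n+1) i⟫ = ∑ i, ⟪ws i, w n i⟫
              + (⟪ws (y t), w (n+1) (y t)⟫ - ⟪ws (y t), w n (y t)⟫)
              + (⟪ws (yhat t), w (n+1) (yhat t)⟫ - ⟪ws (yhat t), w n (yhat t)⟫) := by
            apply sum_update_pair hab
            intro i hi1 hi2
            rw [hoth i hi1 hi2]
          have e1 : ⟪ws (y t), w (n+1) (y t)⟫ - ⟪ws (y t), w n (y t)⟫ = ⟪ws (y t), x t⟫ := by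
            rw [hy, inner_add_right]; ring
          have e2 : ⟪ws (yhat t), w (n+1) (yhat t)⟫ - ⟪ws (yhat t), w n (yhat t)⟫
              = -⟪ws (yhat t), x t⟫ := by
            rw [hyh, inner_sub_right]; ring
          have hmarg := hmargin t (yhat t) hmis
          have c1 : ⟪x t, ws (y t)⟫ = ⟪ws (y t), x t⟫ := real_inner_comm _ _
          have c2 : ⟪x t, ws (yhat t)⟫ = ⟪ws (yhat t), x t⟫ := real_inner_comm _ _
          rw [hsum, e1, e2, hMeq]
          push_cast
          linarith
        · -- norm sum increases by at most 2R²
          have hsum : ∑ i, ‖w (n+1) i‖ ^ 2 = ∑ i, ‖w n i‖ ^ 2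
              + (‖w (n+1) (y t)‖ ^ 2 - ‖w n (y t)‖ ^ 2)
              + (‖w (n+1) (yhat t)‖ ^ 2 - ‖w n (yhat t)‖ ^ 2) := by
            apply sum_update_pair hab
            intro i hi1 hi2
            rw [hoth i hi1 hi2]
          have e1 : ‖w (n+1) (y t)‖ ^ 2 = ‖w n (y t)‖ ^ 2 + 2 * ⟪w n (y t), x t⟫ + ‖x t‖ ^ 2 := by
            rw [hy, ← real_inner_self_eq_norm_sq, ← real_inner_self_eq_norm_sq,
              ← real_inner_self_eq_norm_sq, inner_add_add_self]
            linear_combination (-1 : ℝ) * real_inner_comm (x t) (w n (y t))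
          have e2 : ‖w (n+1) (yhat t)‖ ^ 2
              = ‖w n (yhat t)‖ ^ 2 - 2 * ⟪w n (yhat t), x t⟫ + ‖x t‖ ^ 2 := by
            rw [hyh, ← real_inner_self_eq_norm_sq, ← real_inner_self_eq_norm_sq,
              ← real_inner_self_eq_norm_sq, inner_sub_sub_self]
            linear_combination real_inner_comm (x t) (w n (yhat t))
          have hp := hpred t (y t)
          rw [hval] at hp
          have hxn : ‖x t‖ ^ 2 ≤ R ^ 2 := by
            have := hx t
            nlinarith [norm_nonneg (x t)]
          rw [hsum, e1, e2, hMeq]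
          push_cast
          linarith
  obtain ⟨h1, h2⟩ := key T le_rfl
  have hcard : (Finset.univ.filter fun t : Fin T => yhat t ≠ y t).card = M T := by
    simp only [hMdef]
    congr 1
    apply Finset.filter_congr
    intro t' _
    simp [t'.isLt]
  rw [hcard]
  set m : ℕ := M T with hm
  -- Cauchy-Schwarz
  have hcs : (∑ i, ⟪ws i, w T i⟫) ^ 2 ≤ (∑ i, ‖ws i‖ ^ 2) * (∑ i, ‖w T i‖ ^ 2) := by
    calc (∑ i, ⟪ws i, w T i⟫) ^ 2 ≤ (∑ i, ‖ws i‖ * ‖w T i‖) ^ 2 := by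
          apply sq_le_sq'
          · have : -(∑ i, ‖ws i‖ * ‖w T i‖) ≤ ∑ i, ⟪ws i, w T i⟫ := by
              rw [← Finset.sum_neg_distrib]
              apply Finset.sum_le_sum
              intro i _
              have := abs_real_inner_le_norm (ws i) (w T i)
              have := abs_le.mp this
              linarith [this.1]
            linarith [this]
          · apply Finset.sum_le_sum
            intro i _
            exact real_inner_le_norm _ _
      _ ≤ (∑ i, ‖ws i‖ ^ 2) * (∑ i, ‖w T i‖ ^ 2) := by
          have := Finset.sum_mul_sq_le_sq_mul_sq Finset.univ (fun i => ‖ws i‖) (fun i => ‖w T i‖)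
          exact this
  have hmn : (0:ℝ) ≤ γ * m := by positivity
  have hkey : (γ * m) ^ 2 ≤ 1 * (2 * R ^ 2 * m) := by
    have h3 : (γ * m) ^ 2 ≤ (∑ i, ⟪ws i, w T i⟫) ^ 2 := by
      apply sq_le_sq' <;> nlinarith
    have h4 : (∑ i, ‖ws i‖ ^ 2) * (∑ i, ‖w T i‖ ^ 2) ≤ 1 * (2 * R ^ 2 * m) := by
      apply mul_le_mul hws h2
      · positivity
      · norm_num
    linarith
  apply Nat.le_floor
  rw [div_pow]
  by_cases hm0 : m = 0
  · rw [hm0]; norm_num; positivity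
  · have hm1 : (1:ℝ) ≤ m := by
      exact_mod_cast Nat.one_le_iff_ne_zero.mpr hm0
    rw [show (2:ℝ) * (R ^ 2 / γ ^ 2) = 2 * R ^ 2 / γ ^ 2 by ring,
      le_div_iff₀ (by positivity)]
    nlinarith [sq_nonneg γ, sq_nonneg (m:ℝ)]
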